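/- arXiv:1605.01947 — 2 statements merged into one kernel-verified Lean document; each statement's English description precedes it below -/
import Mathlib

section
/- Let f, h: ℝⁿ → ℝ with h concave and differentiable, and let S ⊆ ℝⁿ be nonempty. Suppose p⁽ᵗ⁾ ∈ S and p⁽ᵗ⁺¹⁾ ∈ S maximizes the function p ↦ f(p) − h(p⁽ᵗ⁾) − ⟨∇h(p⁽ᵗ⁾), p − p⁽ᵗ⁾⟩ over S. Then f(p⁽ᵗ⁺¹⁾) − h(p⁽ᵗ⁺¹⁾) ≥ f(p⁽ᵗ⁾) − h(p⁽ᵗ⁾). -/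
lemma supergrad {n : ℕ} {h : (Fin n → ℝ) → ℝ}
    (hconc : ConcaveOn ℝ Set.univ h) (hdiff : Differentiable ℝ h)
    (q p : Fin n → ℝ) :
    h p ≤ h q + fderiv ℝ h q (p - q) := by
  classical
  set v := p - q with hv
  -- line restriction
  set A : ℝ →ᵃ[ℝ] (Fin n → ℝ) :=
    { toFun := fun t => q + t • v
      linear := LinearMap.toSpanSingleton ℝ _ v
      map_vadd' := by
        intro t s
        simp [LinearMap.toSpanSingleton_apply, add_smul]
        abel }
  have hgconc : ConcaveOn ℝ (A ⁻¹' Set.univ) (h ∘ A) := hconc.comp_affineMap A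
  have hA : ∀ t : ℝ, A t = q + t • v := fun t => rfl
  have hg : HasDerivAt (h ∘ A) (fderiv ℝ h q v) 0 := by
    have h1 : HasDerivAt (fun t : ℝ => q + t • v) v 0 := by
      simpa using ((hasDerivAt_id (0:ℝ)).smul_const v).const_add q
    have h2 : HasFDerivAt h (fderiv ℝ h (q + (0:ℝ) • v)) (q + (0:ℝ) • v) :=
      (hdiff _).hasFDerivAt
    have := h2.comp_hasDerivAt (0:ℝ) h1
    simp only [zero_smul, add_zero] at this
    exact this
  have hconv : ConvexOn ℝ Set.univ (-(h ∘ A)) := by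
    simpa [Set.preimage_univ] using hgconc.neg
  have hslope := hconv.le_slope_of_hasDerivAt (Set.mem_univ (0:ℝ)) (Set.mem_univ (1:ℝ))
    one_pos hg.neg
  rw [slope_def_field] at hslope
  have e0 : (h ∘ A) 0 = h q := by simp [hA]
  have e1 : (h ∘ A) 1 = h p := by simp [hA, hv]
  simp only [Pi.neg_apply, e0, e1] at hslope
  have : h p - h q ≤ fderiv ℝ h q v := by
    have := neg_le_neg hslope
    simp [div_eq_mul_inv] at hslope ⊢
    linarith
  linarith

/-- Monotone improvement of the DC iteration: maximizing the linearized
surrogate does not decrease the objective f − h. -/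
theorem stmt_5 (n : ℕ) (f h : (Fin n → ℝ) → ℝ) (S : Set (Fin n → ℝ))
    (hconc : ConcaveOn ℝ Set.univ h)
    (hdiff : Differentiable ℝ h)
    (hS : S.Nonempty)
    (pt pt1 : Fin n → ℝ) (hpt : pt ∈ S) (hpt1 : pt1 ∈ S)
    (hmax : ∀ p ∈ S,
      f p - h pt - fderiv ℝ h pt (p - pt)
        ≤ f pt1 - h pt - fderiv ℝ h pt (pt1 - pt)) :
    f pt - h pt ≤ f pt1 - h pt1 := by
  have h1 := hmax pt hpt
  have h2 := supergrad hconc hdiff pt pt1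
  simp only [sub_self, map_zero] at h1
  linarith
end

section
/- Fix q > 0 and positive constants w, v, g, h, N, M, β, I with w ≥ v. Define L(p) = w·log(1 + g·p/(N + I·q)) + v·log(1 + h·q/(M + β·p)) on [0, P]. Then the maximum of L over [0, P] is attained at p = 0 or p = P. -/
open Set

/-- When the downlink weight dominates the uplink weight (w ≥ v), the
single-variable weighted sum-rate attains its maximum over [0,P] at an
endpoint. -/
theorem stmt_9 (w v g h N M β I q P : ℝ)
    (hw : 0 < w) (hv : 0 < v) (hg : 0 < g) (hh : 0 < h)
    (hN : 0 < N) (hM : 0 < M) (hβ : 0 < β) (hI : 0 < I)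
    (hq : 0 < q) (hP : 0 < P) (hwv : v ≤ w)
    (L : ℝ → ℝ)
    (hL : L = fun p => w * Real.log (1 + g * p / (N + I * q))
        + v * Real.log (1 + h * q / (M + β * p))) :
    ∀ p ∈ Icc (0 : ℝ) P, L p ≤ max (L 0) (L P) := by
  set D := N + I * q with hD
  have hD0 : 0 < D := by positivity
  -- the sign function
  set f : ℝ → ℝ := fun p => w * g * ((M + β * p) * (M + β * p + h * q))
      - v * h * q * β * (D + g * p) with hf
  -- derivative of L at nonnegative points
  have hderiv : ∀ p : ℝ, 0 ≤ p → HasDerivAt L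
      (w * g / (D + g * p) - v * h * q * β / ((M + β * p) * (M + β * p + h * q))) p := by
    intro p hp
    have hMp : 0 < M + β * p := by positivity
    have hMp' : (M + β * p) ≠ 0 := ne_of_gt hMp
    have h1 : HasDerivAt (fun x : ℝ => 1 + g * x / D) (g * 1 / D) p := by
      exact (((hasDerivAt_id p).const_mul g).div_const D).const_add 1
    have h2 : HasDerivAt (fun x : ℝ => M + β * x) (β * 1) p :=
      ((hasDerivAt_id p).const_mul β).const_add M
    have h3 : HasDerivAt (fun x : ℝ => 1 + h * q / (M + β * x))
        ((0 * (M + β * p) - h * q * (β * 1)) / (M + β * p) ^ 2) p := by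
      exact ((hasDerivAt_const p (h * q)).div h2 hMp').const_add 1
    have hv1 : (0:ℝ) < 1 + g * p / D := by positivity
    have hv2 : (0:ℝ) < 1 + h * q / (M + β * p) := by positivity
    have hlog1 := (h1.log (ne_of_gt hv1)).const_mul w
    have hlog2 := (h3.log (ne_of_gt hv2)).const_mul v
    have := hlog1.add hlog2
    rw [hL]
    refine this.congr_deriv ?_
    have hDg : D + g * p ≠ 0 := by positivity
    have hMph : M + β * p + h * q ≠ 0 := by positivity
    field_simp
    ring
  -- continuity of L on [0,P]
  have hcontL : ContinuousOn L (Icc 0 P) := fun p hp =>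
    ((hderiv p hp.1).differentiableAt.continuousAt).continuousWithinAt
  -- deriv sign vs f
  have hsign : ∀ p : ℝ, 0 ≤ p →
      deriv L p = f p / ((D + g * p) * ((M + β * p) * (M + β * p + h * q))) := by
    intro p hp
    rw [(hderiv p hp).deriv]
    have hDg : D + g * p ≠ 0 := by positivity
    have hMp : (M + β * p) ≠ 0 := by positivity
    have hMph : M + β * p + h * q ≠ 0 := by positivity
    field_simp [hf]
    ring
  -- monotonicity of f
  have hfmono : ∀ a b : ℝ, 0 ≤ a → a ≤ b → f a ≤ f b := by
    intro a b ha hab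
    simp only [hf]
    have key : (w * g * ((M + β * b) * (M + β * b + h * q)) - v * h * q * β * (D + g * b))
        - (w * g * ((M + β * a) * (M + β * a + h * q)) - v * h * q * β * (D + g * a))
        = g * β * (b - a) * (w * (2 * M + β * (a + b) + h * q) - v * (h * q)) := by ring
    have h1 : 0 ≤ w * (2 * M + β * (a + b) + h * q) - v * (h * q) := by
      nlinarith [mul_nonneg (sub_nonneg.2 hwv) (mul_nonneg hh.le hq.le), mul_pos hw hM,
        mul_nonneg hw.le (mul_nonneg hβ.le (by linarith : (0:ℝ) ≤ a + b))]
    nlinarith [mul_nonneg (mul_nonneg (mul_nonneg hg.le hβ.le) (sub_nonneg.2 hab)) h1]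
  -- antitone on [0,c] if f c ≤ 0, monotone on [c,P] if f c ≥ 0
  have hanti : ∀ c : ℝ, c ∈ Icc (0:ℝ) P → f c ≤ 0 → AntitoneOn L (Icc 0 c) := by
    intro c hc hfc
    apply antitoneOn_of_deriv_nonpos (convex_Icc 0 c)
      (hcontL.mono (Icc_subset_Icc le_rfl hc.2))
    · intro x hx
      rw [interior_Icc] at hx
      exact (hderiv x hx.1.le).differentiableAt.differentiableWithinAt
    · intro x hx
      rw [interior_Icc] at hx
      rw [hsign x hx.1.le]
      apply div_nonpos_of_nonpos_of_nonneg
      · exact le_trans (hfmono x c hx.1.le hx.2.le) hfc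
      · have hx0 : 0 ≤ x := hx.1.le
        positivity
  have hmono : ∀ c : ℝ, c ∈ Icc (0:ℝ) P → 0 ≤ f c → MonotoneOn L (Icc c P) := by
    intro c hc hfc
    apply monotoneOn_of_deriv_nonneg (convex_Icc c P)
      (hcontL.mono (Icc_subset_Icc hc.1 le_rfl))
    · intro x hx
      rw [interior_Icc] at hx
      exact (hderiv x (le_trans hc.1 hx.1.le)).differentiableAt.differentiableWithinAt
    · intro x hx
      rw [interior_Icc] at hx
      rw [hsign x (le_trans hc.1 hx.1.le)]
      apply div_nonneg
      · exact le_trans hfc (hfmono c x hc.1 hx.1.le)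
      · have hx0 : 0 ≤ x := le_trans hc.1 hx.1.le
        positivity
  intro p hp
  by_cases hfP : f P ≤ 0
  · -- L antitone on [0,P]
    have := hanti P ⟨hP.le, le_rfl⟩ hfP ⟨le_rfl, hP.le⟩ hp hp.1
    exact le_trans this (le_max_left _ _)
  · by_cases hf0 : 0 ≤ f 0
    · have := hmono 0 ⟨le_rfl, hP.le⟩ hf0 hp ⟨hP.le, le_rfl⟩ hp.2
      exact le_trans this (le_max_right _ _)
    · push_neg at hf0 hfP
      have hfc : ContinuousOn f (Icc 0 P) := by
        apply Continuous.continuousOn; simp only [hf]; fun_prop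
      obtain ⟨c, hc, hfc0⟩ := intermediate_value_Icc hP.le hfc
        (mem_Icc.2 ⟨hf0.le, hfP.le⟩)
      by_cases hpc : p ≤ c
      · have := hanti c hc hfc0.le ⟨le_rfl, hc.1⟩ ⟨hp.1, hpc⟩ hp.1
        exact le_trans this (le_max_left _ _)
      · push_neg at hpc
        have := hmono c hc hfc0.ge ⟨hpc.le, hp.2⟩ ⟨hc.2, le_rfl⟩ hp.2
        exact le_trans this (le_max_right _ _)
end
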